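/- Let R be a commutative ring, P a finitely generated projective R-module, and x : P → P an R-linear map. Then P, with the R[X]-module structure in which X acts by x, is a finitely presented R[X]-module. -/
import Mathlib

open Polynomial TensorProduct

section Aux
variable (R : Type) [CommRing R]
    (P : Type) [AddCommGroup P] [Module R P] (x : P →ₗ[R] P)

noncomputable def epsAEval : R[X] ⊗[R] P →ₗ[R[X]] Module.AEval' x :=
  LinearMap.liftBaseChange R[X] (Module.AEval.of R P x).toLinearMap

noncomputable def betaAEval : R[X] ⊗[R] P →ₗ[R[X]] R[X] ⊗[R] P :=
  (X : R[X]) • LinearMap.id - x.baseChange R[X]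

lemma epsAEval_tmul (p : R[X]) (m : P) :
    epsAEval R P x (p ⊗ₜ m) = p • Module.AEval.of R P x m := rfl

lemma betaAEval_tmul (p : R[X]) (m : P) :
    betaAEval R P x (p ⊗ₜ m) = (X * p) ⊗ₜ m - p ⊗ₜ (x m) := by
  simp [betaAEval, smul_tmul', smul_eq_mul]

lemma epsAEval_surjective : Function.Surjective (epsAEval R P x) := by
  intro y
  refine ⟨1 ⊗ₜ ((Module.AEval.of R P x).symm y), ?_⟩
  rw [epsAEval_tmul, one_smul, LinearEquiv.apply_symm_apply]

lemma key_mem (p : R[X]) (m : P) :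
    p ⊗ₜ m - (1 : R[X]) ⊗ₜ (aeval x p • m) ∈ LinearMap.range (betaAEval R P x) := by
  induction p using Polynomial.induction_on' with
  | add p q hp hq =>
    have := Submodule.add_mem _ hp hq
    simpa [add_tmul, tmul_add, map_add, add_smul, sub_add_sub_comm] using this
  | monomial n r =>
    induction n generalizing m with
    | zero =>
      have : (monomial 0 r : R[X]) ⊗ₜ m = (1 : R[X]) ⊗ₜ[R] (aeval x (monomial 0 r) • m) := by
        simp only [monomial_zero_left, aeval_C]
        rw [show (C r : R[X]) = r • 1 by simp [Algebra.smul_def], smul_tmul]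
        simp [Module.algebraMap_end_apply]
      rw [this, sub_self]
      exact Submodule.zero_mem _
    | succ n ih =>
      have h1 : (monomial (n+1) r : R[X]) ⊗ₜ[R] m - (monomial n r : R[X]) ⊗ₜ (x m)
          ∈ LinearMap.range (betaAEval R P x) := by
        refine ⟨(monomial n r : R[X]) ⊗ₜ m, ?_⟩
        rw [betaAEval_tmul, X_mul_monomial]
      have h2 := ih (x m)
      have := Submodule.add_mem _ h1 h2
      have heq : aeval x (monomial n r) • x m = aeval x (monomial (n+1) r) • m := by
        show (aeval x (monomial n r)) (x m) = (aeval x (monomial (n+1) r)) m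
        simp [aeval_monomial, Module.End.mul_apply, pow_succ]
      rw [heq] at this
      simpa using this

lemma ker_eps_eq : LinearMap.ker (epsAEval R P x) = LinearMap.range (betaAEval R P x) := by
  apply le_antisymm
  · intro t ht
    rw [LinearMap.mem_ker] at ht
    have key : ∀ s : R[X] ⊗[R] P,
        s - (1 : R[X]) ⊗ₜ ((Module.AEval.of R P x).symm (epsAEval R P x s))
          ∈ LinearMap.range (betaAEval R P x) := by
      intro s
      induction s with
      | zero => simp
      | tmul p m =>
        rw [epsAEval_tmul, Module.AEval.of_symm_smul, LinearEquiv.symm_apply_apply]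
        exact key_mem R P x p m
      | add s t hs ht =>
        have := Submodule.add_mem _ hs ht
        simpa [tmul_add, sub_add_sub_comm] using this
    have := key t
    rwa [ht, map_zero, tmul_zero, sub_zero] at this
  · rintro t ⟨s, rfl⟩
    rw [LinearMap.mem_ker]
    have hcomp : (epsAEval R P x).comp (betaAEval R P x) = 0 := by
      ext m
      simp only [LinearMap.comp_apply, AlgebraTensorModule.curry_apply, curry_apply,
        LinearMap.coe_restrictScalars, LinearMap.zero_apply]
      rw [betaAEval_tmul, map_sub, epsAEval_tmul, epsAEval_tmul]
      rw [show Module.AEval.of R P x (x m) = (X : R[X]) • Module.AEval.of R P x m from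
        (Module.AEval.X_smul_of x m).symm]
      rw [mul_one, one_smul, sub_self]
    exact LinearMap.congr_fun hcomp s

end Aux

theorem finitePresentation_polynomial_module_of_fg_projective
    (R : Type) [CommRing R]
    (P : Type) [AddCommGroup P] [Module R P]
    [Module.Finite R P] [Module.Projective R P]
    (x : P →ₗ[R] P) :
    Module.FinitePresentation (Polynomial R) (Module.AEval' x) := by
  have hP := Module.finitePresentation_of_projective R P
  have hfp : Module.FinitePresentation R[X] (R[X] ⊗[R] P) := inferInstance
  apply Module.finitePresentation_of_surjective (epsAEval R P x) (epsAEval_surjective R P x)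
  rw [ker_eps_eq, LinearMap.range_eq_map]
  exact Submodule.FG.map _ (Module.Finite.fg_top (R := R[X]) (M := R[X] ⊗[R] P))
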